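/- arXiv:2404.06586 — 2 statements merged into one kernel-verified Lean document; each statement's English description precedes it below -/
import Mathlib

section
/- In hyperspherical coordinates for n = 2, the functions Ĩ_1 = p_{θ_2} + (r²C/2)cos²θ_1 and Ĩ_2 = p_{θ_3} + (r²C/2)sin²θ_1 are first integrals of the Hamiltonian H̃_C = (1/2)[p_r² + p_{θ_1}²/r² + (1/r²)(p_{θ_2}²/cos²θ_1 + p_{θ_3}²/sin²θ_1) − (p_{θ_2}+p_{θ_3})²/(1+r²)] with respect to the twisted Poisson structure {r,p_r}=1, {θ_j, p_{θ_k}} = δ_{jk}, {p_r, p_{θ_2}} = rC cos²θ_1, {p_r, p_{θ_3}} = rC sin²θ_1, {p_{θ_1}, p_{θ_2}} = −r²C sinθ_1 cosθ_1, {p_{θ_1}, p_{θ_3}} = r²C sinθ_1 cosθ_1, {p_{θ_2}, p_{θ_3}} = 0, and all other brackets among coordinates zero. -/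
open Real

/-- Phase space of the `n = 2` reduced LR system in hyperspherical coordinates:
`z = (r, θ₁, θ₂, θ₃, p_r, p_{θ₁}, p_{θ₂}, p_{θ₃})` indexed `0,…,7`. -/
abbrev Ph := Fin 8 → ℝ

/-- Partial derivative `∂ᵢf`. -/
noncomputable def pd (i : Fin 8) (f : Ph → ℝ) (z : Ph) : ℝ :=
  fderiv ℝ f z (Pi.single i 1)

/-- The twisted Poisson bracket determined by `{r,p_r}=1`, `{θⱼ,p_{θₖ}}=δⱼₖ`,
`{p_r,p_{θ₂}} = rC cos²θ₁`, `{p_r,p_{θ₃}} = rC sin²θ₁`,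
`{p_{θ₁},p_{θ₂}} = −r²C sinθ₁cosθ₁`, `{p_{θ₁},p_{θ₃}} = r²C sinθ₁cosθ₁`,
`{p_{θ₂},p_{θ₃}} = 0`, all other coordinate brackets zero, extended by
bilinearity and the Leibniz rule. -/
noncomputable def PB (C : ℝ) (f g : Ph → ℝ) (z : Ph) : ℝ :=
  (pd 0 f z * pd 4 g z - pd 4 f z * pd 0 g z)
  + (pd 1 f z * pd 5 g z - pd 5 f z * pd 1 g z)
  + (pd 2 f z * pd 6 g z - pd 6 f z * pd 2 g z)
  + (pd 3 f z * pd 7 g z - pd 7 f z * pd 3 g z)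
  + (z 0 * C * cos (z 1) ^ 2) * (pd 4 f z * pd 6 g z - pd 6 f z * pd 4 g z)
  + (z 0 * C * sin (z 1) ^ 2) * (pd 4 f z * pd 7 g z - pd 7 f z * pd 4 g z)
  + (-(z 0) ^ 2 * C * sin (z 1) * cos (z 1))
      * (pd 5 f z * pd 6 g z - pd 6 f z * pd 5 g z)
  + ((z 0) ^ 2 * C * sin (z 1) * cos (z 1))
      * (pd 5 f z * pd 7 g z - pd 7 f z * pd 5 g z)

/-- The reduced Hamiltonian
`H̃_C = (1/2)[p_r² + p_{θ₁}²/r² + (1/r²)(p_{θ₂}²/cos²θ₁ + p_{θ₃}²/sin²θ₁)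
− (p_{θ₂}+p_{θ₃})²/(1+r²)]`. -/
noncomputable def HamR (z : Ph) : ℝ :=
  (1 / 2) * ((z 4) ^ 2 + (z 5) ^ 2 / (z 0) ^ 2
    + (1 / (z 0) ^ 2) * ((z 6) ^ 2 / cos (z 1) ^ 2 + (z 7) ^ 2 / sin (z 1) ^ 2)
    - (z 6 + z 7) ^ 2 / (1 + (z 0) ^ 2))

/-- `Ĩ₁ = p_{θ₂} + (r²C/2) cos²θ₁`. -/
noncomputable def It1 (C : ℝ) (z : Ph) : ℝ := z 6 + (z 0) ^ 2 * C / 2 * cos (z 1) ^ 2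

/-- `Ĩ₂ = p_{θ₃} + (r²C/2) sin²θ₁`. -/
noncomputable def It2 (C : ℝ) (z : Ph) : ℝ := z 7 + (z 0) ^ 2 * C / 2 * sin (z 1) ^ 2

/-- `Ĩ₃ = p_{θ₁}² + p_{θ₂}²/cos²θ₁ + p_{θ₃}²/sin²θ₁ − (p_{θ₂}+p_{θ₃})²`. -/
noncomputable def It3 (z : Ph) : ℝ :=
  (z 5) ^ 2 + (z 6) ^ 2 / cos (z 1) ^ 2 + (z 7) ^ 2 / sin (z 1) ^ 2 - (z 6 + z 7) ^ 2

lemma pd_eq {f : Ph → ℝ} {L : Ph →L[ℝ] ℝ} {z : Ph} (h : HasFDerivAt f L z) (i : Fin 8) :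
    pd i f z = L (Pi.single i 1) := by unfold pd; rw [h.fderiv]

lemma hproj (i : Fin 8) (z : Ph) :
    HasFDerivAt (fun z : Ph => z i) (ContinuousLinearMap.proj i : Ph →L[ℝ] ℝ) z :=
  (ContinuousLinearMap.proj (i : Fin 8) : Ph →L[ℝ] ℝ).hasFDerivAt

lemma hpow2 {f : Ph → ℝ} {L : Ph →L[ℝ] ℝ} {z : Ph} (h : HasFDerivAt f L z) :
    HasFDerivAt (fun x => f x ^ 2) ((2 * f z) • L) z := by
  simpa [Function.comp_def] using (hasDerivAt_pow 2 (f z)).comp_hasFDerivAt z h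

lemma hdiv {z : Ph} {f g : Ph → ℝ} {F G : Ph →L[ℝ] ℝ} (hf : HasFDerivAt f F z)
    (hg : HasFDerivAt g G z) (hne : g z ≠ 0) :
    HasFDerivAt (fun x => f x / g x) (f z • ((-(g z ^ 2)⁻¹) • G) + (g z)⁻¹ • F) z := by
  simpa only [div_eq_mul_inv, Pi.mul_def, Function.comp_def] using hf.mul ((hasDerivAt_inv hne).comp_hasFDerivAt z hg)

set_option maxHeartbeats 2000000 in
/-- `Ĩ₁` and `Ĩ₂` are first integrals of `H̃_C` with respect to
the twisted Poisson structure. -/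
theorem LR_hyperspherical_linear_integrals (C : ℝ) (z : Ph)
    (hr : 0 < z 0) (hθ : sin (z 1) * cos (z 1) ≠ 0) :
    PB C (It1 C) HamR z = 0 ∧ PB C (It2 C) HamR z = 0 := by
  have hs : sin (z 1) ≠ 0 := fun h => hθ (by rw [h]; ring)
  have hc : cos (z 1) ≠ 0 := fun h => hθ (by rw [h]; ring)
  have hr2ne : (z 0) ^ 2 ≠ 0 := ne_of_gt (pow_pos hr 2)
  have h1r2ne : (1 : ℝ) + (z 0) ^ 2 ≠ 0 := by positivity
  have hc2ne : cos (z 1) ^ 2 ≠ 0 := pow_ne_zero 2 hc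
  have hs2ne : sin (z 1) ^ 2 ≠ 0 := pow_ne_zero 2 hs
  have hcos : HasFDerivAt (fun z : Ph => cos (z 1))
      ((-sin (z 1)) • (ContinuousLinearMap.proj 1 : Ph →L[ℝ] ℝ)) z :=
    by have h := (Real.hasDerivAt_cos (z 1)).comp_hasFDerivAt z (hproj 1 z); exact h
  have hsin : HasFDerivAt (fun z : Ph => sin (z 1))
      ((cos (z 1)) • (ContinuousLinearMap.proj 1 : Ph →L[ℝ] ℝ)) z :=
    by have h := (Real.hasDerivAt_sin (z 1)).comp_hasFDerivAt z (hproj 1 z); exact h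
  have hr2 := hpow2 (hproj 0 z)
  have hcos2 := hpow2 hcos
  have hsin2 := hpow2 hsin
  have hIt1 : HasFDerivAt (It1 C) _ z :=
    (hproj 6 z).add
      ((hdiv (hr2.mul_const C) (hasFDerivAt_const (2:ℝ) z) two_ne_zero).mul hcos2)
  have hIt2 : HasFDerivAt (It2 C) _ z :=
    (hproj 7 z).add
      ((hdiv (hr2.mul_const C) (hasFDerivAt_const (2:ℝ) z) two_ne_zero).mul hsin2)
  have hH : HasFDerivAt HamR _ z :=
    ((((hpow2 (hproj 4 z)).add (hdiv (hpow2 (hproj 5 z)) hr2 hr2ne)).add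
      ((hdiv (hasFDerivAt_const (1:ℝ) z) hr2 hr2ne).mul
        ((hdiv (hpow2 (hproj 6 z)) hcos2 hc2ne).add
          (hdiv (hpow2 (hproj 7 z)) hsin2 hs2ne)))).sub
      (hdiv (hpow2 ((hproj 6 z).add (hproj 7 z)))
        ((hasFDerivAt_const (1:ℝ) z).add hr2) h1r2ne)).const_mul (1/2)
  have e0 : pd 0 HamR z = (1/2) * (-(2 * (z 5)^2 / (z 0)^3) - (2 / (z 0)^3) * ((z 6)^2 / cos (z 1)^2 + (z 7)^2 / sin (z 1)^2) + 2 * z 0 * (z 6 + z 7)^2 / (1 + (z 0)^2)^2) := by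
    rw [pd_eq hH]
    simp only [ContinuousLinearMap.add_apply, ContinuousLinearMap.smul_apply,
      ContinuousLinearMap.sub_apply, ContinuousLinearMap.proj_apply,
      ContinuousLinearMap.zero_apply, ContinuousLinearMap.coe_smul', Pi.smul_apply,
      Pi.single_apply, smul_eq_mul, Fin.reduceEq, reduceIte, Pi.add_apply]
    all_goals first
    | (field_simp; ring)
    | ring
  have e1 : pd 1 HamR z = ((z 6)^2 * sin (z 1) / cos (z 1)^3 - (z 7)^2 * cos (z 1) / sin (z 1)^3) / (z 0)^2 := by
    rw [pd_eq hH]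
    simp only [ContinuousLinearMap.add_apply, ContinuousLinearMap.smul_apply,
      ContinuousLinearMap.sub_apply, ContinuousLinearMap.proj_apply,
      ContinuousLinearMap.zero_apply, ContinuousLinearMap.coe_smul', Pi.smul_apply,
      Pi.single_apply, smul_eq_mul, Fin.reduceEq, reduceIte]
    all_goals first
    | (field_simp; ring)
    | ring
  have e2 : pd 2 HamR z = 0 := by
    rw [pd_eq hH]
    simp only [ContinuousLinearMap.add_apply, ContinuousLinearMap.smul_apply,
      ContinuousLinearMap.sub_apply, ContinuousLinearMap.proj_apply,
      ContinuousLinearMap.zero_apply, ContinuousLinearMap.coe_smul', Pi.smul_apply,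
      Pi.single_apply, smul_eq_mul, Fin.reduceEq, reduceIte]
    all_goals first
    | (field_simp; ring)
    | ring
  have e3 : pd 3 HamR z = 0 := by
    rw [pd_eq hH]
    simp only [ContinuousLinearMap.add_apply, ContinuousLinearMap.smul_apply,
      ContinuousLinearMap.sub_apply, ContinuousLinearMap.proj_apply,
      ContinuousLinearMap.zero_apply, ContinuousLinearMap.coe_smul', Pi.smul_apply,
      Pi.single_apply, smul_eq_mul, Fin.reduceEq, reduceIte]
    all_goals first
    | (field_simp; ring)
    | ring
  have e4 : pd 4 HamR z = z 4 := by
    rw [pd_eq hH]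
    simp only [ContinuousLinearMap.add_apply, ContinuousLinearMap.smul_apply,
      ContinuousLinearMap.sub_apply, ContinuousLinearMap.proj_apply,
      ContinuousLinearMap.zero_apply, ContinuousLinearMap.coe_smul', Pi.smul_apply,
      Pi.single_apply, smul_eq_mul, Fin.reduceEq, reduceIte]
    all_goals first
    | (field_simp; ring)
    | ring
  have e5 : pd 5 HamR z = z 5 / (z 0)^2 := by
    rw [pd_eq hH]
    simp only [ContinuousLinearMap.add_apply, ContinuousLinearMap.smul_apply,
      ContinuousLinearMap.sub_apply, ContinuousLinearMap.proj_apply,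
      ContinuousLinearMap.zero_apply, ContinuousLinearMap.coe_smul', Pi.smul_apply,
      Pi.single_apply, smul_eq_mul, Fin.reduceEq, reduceIte]
    all_goals first
    | (field_simp; ring)
    | ring
  have e6 : pd 6 HamR z = z 6 / ((z 0)^2 * cos (z 1)^2) - (z 6 + z 7) / (1 + (z 0)^2) := by
    rw [pd_eq hH]
    simp only [ContinuousLinearMap.add_apply, ContinuousLinearMap.smul_apply,
      ContinuousLinearMap.sub_apply, ContinuousLinearMap.proj_apply,
      ContinuousLinearMap.zero_apply, ContinuousLinearMap.coe_smul', Pi.smul_apply,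
      Pi.single_apply, smul_eq_mul, Fin.reduceEq, reduceIte, Pi.add_apply]
    all_goals first
    | (field_simp; ring)
    | ring
  have e7 : pd 7 HamR z = z 7 / ((z 0)^2 * sin (z 1)^2) - (z 6 + z 7) / (1 + (z 0)^2) := by
    rw [pd_eq hH]
    simp only [ContinuousLinearMap.add_apply, ContinuousLinearMap.smul_apply,
      ContinuousLinearMap.sub_apply, ContinuousLinearMap.proj_apply,
      ContinuousLinearMap.zero_apply, ContinuousLinearMap.coe_smul', Pi.smul_apply,
      Pi.single_apply, smul_eq_mul, Fin.reduceEq, reduceIte, Pi.add_apply]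
    all_goals first
    | (field_simp; ring)
    | ring
  have f0 : pd 0 (It1 C) z = z 0 * C * cos (z 1)^2 := by
    rw [pd_eq hIt1]
    simp only [ContinuousLinearMap.add_apply, ContinuousLinearMap.smul_apply,
      ContinuousLinearMap.sub_apply, ContinuousLinearMap.proj_apply,
      ContinuousLinearMap.zero_apply, ContinuousLinearMap.coe_smul', Pi.smul_apply,
      Pi.single_apply, smul_eq_mul, Fin.reduceEq, reduceIte]
    all_goals first
    | (field_simp; ring)
    | ring
  have g0 : pd 0 (It2 C) z = z 0 * C * sin (z 1)^2 := by
    rw [pd_eq hIt2]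
    simp only [ContinuousLinearMap.add_apply, ContinuousLinearMap.smul_apply,
      ContinuousLinearMap.sub_apply, ContinuousLinearMap.proj_apply,
      ContinuousLinearMap.zero_apply, ContinuousLinearMap.coe_smul', Pi.smul_apply,
      Pi.single_apply, smul_eq_mul, Fin.reduceEq, reduceIte]
    all_goals first
    | (field_simp; ring)
    | ring
  have f1 : pd 1 (It1 C) z = -((z 0)^2 * C * sin (z 1) * cos (z 1)) := by
    rw [pd_eq hIt1]
    simp only [ContinuousLinearMap.add_apply, ContinuousLinearMap.smul_apply,
      ContinuousLinearMap.sub_apply, ContinuousLinearMap.proj_apply,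
      ContinuousLinearMap.zero_apply, ContinuousLinearMap.coe_smul', Pi.smul_apply,
      Pi.single_apply, smul_eq_mul, Fin.reduceEq, reduceIte]
    all_goals first
    | (field_simp; ring)
    | ring
  have g1 : pd 1 (It2 C) z = (z 0)^2 * C * sin (z 1) * cos (z 1) := by
    rw [pd_eq hIt2]
    simp only [ContinuousLinearMap.add_apply, ContinuousLinearMap.smul_apply,
      ContinuousLinearMap.sub_apply, ContinuousLinearMap.proj_apply,
      ContinuousLinearMap.zero_apply, ContinuousLinearMap.coe_smul', Pi.smul_apply,
      Pi.single_apply, smul_eq_mul, Fin.reduceEq, reduceIte]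
    all_goals first
    | (field_simp; ring)
    | ring
  have f2 : pd 2 (It1 C) z = 0 := by
    rw [pd_eq hIt1]
    simp only [ContinuousLinearMap.add_apply, ContinuousLinearMap.smul_apply,
      ContinuousLinearMap.sub_apply, ContinuousLinearMap.proj_apply,
      ContinuousLinearMap.zero_apply, ContinuousLinearMap.coe_smul', Pi.smul_apply,
      Pi.single_apply, smul_eq_mul, Fin.reduceEq, reduceIte]
    all_goals first
    | (field_simp; ring)
    | ring
  have g2 : pd 2 (It2 C) z = 0 := by
    rw [pd_eq hIt2]
    simp only [ContinuousLinearMap.add_apply, ContinuousLinearMap.smul_apply,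
      ContinuousLinearMap.sub_apply, ContinuousLinearMap.proj_apply,
      ContinuousLinearMap.zero_apply, ContinuousLinearMap.coe_smul', Pi.smul_apply,
      Pi.single_apply, smul_eq_mul, Fin.reduceEq, reduceIte]
    all_goals first
    | (field_simp; ring)
    | ring
  have f3 : pd 3 (It1 C) z = 0 := by
    rw [pd_eq hIt1]
    simp only [ContinuousLinearMap.add_apply, ContinuousLinearMap.smul_apply,
      ContinuousLinearMap.sub_apply, ContinuousLinearMap.proj_apply,
      ContinuousLinearMap.zero_apply, ContinuousLinearMap.coe_smul', Pi.smul_apply,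
      Pi.single_apply, smul_eq_mul, Fin.reduceEq, reduceIte]
    all_goals first
    | (field_simp; ring)
    | ring
  have g3 : pd 3 (It2 C) z = 0 := by
    rw [pd_eq hIt2]
    simp only [ContinuousLinearMap.add_apply, ContinuousLinearMap.smul_apply,
      ContinuousLinearMap.sub_apply, ContinuousLinearMap.proj_apply,
      ContinuousLinearMap.zero_apply, ContinuousLinearMap.coe_smul', Pi.smul_apply,
      Pi.single_apply, smul_eq_mul, Fin.reduceEq, reduceIte]
    all_goals first
    | (field_simp; ring)
    | ring
  have f4 : pd 4 (It1 C) z = 0 := by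
    rw [pd_eq hIt1]
    simp only [ContinuousLinearMap.add_apply, ContinuousLinearMap.smul_apply,
      ContinuousLinearMap.sub_apply, ContinuousLinearMap.proj_apply,
      ContinuousLinearMap.zero_apply, ContinuousLinearMap.coe_smul', Pi.smul_apply,
      Pi.single_apply, smul_eq_mul, Fin.reduceEq, reduceIte]
    all_goals first
    | (field_simp; ring)
    | ring
  have g4 : pd 4 (It2 C) z = 0 := by
    rw [pd_eq hIt2]
    simp only [ContinuousLinearMap.add_apply, ContinuousLinearMap.smul_apply,
      ContinuousLinearMap.sub_apply, ContinuousLinearMap.proj_apply,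
      ContinuousLinearMap.zero_apply, ContinuousLinearMap.coe_smul', Pi.smul_apply,
      Pi.single_apply, smul_eq_mul, Fin.reduceEq, reduceIte]
    all_goals first
    | (field_simp; ring)
    | ring
  have f5 : pd 5 (It1 C) z = 0 := by
    rw [pd_eq hIt1]
    simp only [ContinuousLinearMap.add_apply, ContinuousLinearMap.smul_apply,
      ContinuousLinearMap.sub_apply, ContinuousLinearMap.proj_apply,
      ContinuousLinearMap.zero_apply, ContinuousLinearMap.coe_smul', Pi.smul_apply,
      Pi.single_apply, smul_eq_mul, Fin.reduceEq, reduceIte]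
    all_goals first
    | (field_simp; ring)
    | ring
  have g5 : pd 5 (It2 C) z = 0 := by
    rw [pd_eq hIt2]
    simp only [ContinuousLinearMap.add_apply, ContinuousLinearMap.smul_apply,
      ContinuousLinearMap.sub_apply, ContinuousLinearMap.proj_apply,
      ContinuousLinearMap.zero_apply, ContinuousLinearMap.coe_smul', Pi.smul_apply,
      Pi.single_apply, smul_eq_mul, Fin.reduceEq, reduceIte]
    all_goals first
    | (field_simp; ring)
    | ring
  have f6 : pd 6 (It1 C) z = 1 := by
    rw [pd_eq hIt1]
    simp only [ContinuousLinearMap.add_apply, ContinuousLinearMap.smul_apply,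
      ContinuousLinearMap.sub_apply, ContinuousLinearMap.proj_apply,
      ContinuousLinearMap.zero_apply, ContinuousLinearMap.coe_smul', Pi.smul_apply,
      Pi.single_apply, smul_eq_mul, Fin.reduceEq, reduceIte]
    all_goals first
    | (field_simp; ring)
    | ring
  have g6 : pd 6 (It2 C) z = 0 := by
    rw [pd_eq hIt2]
    simp only [ContinuousLinearMap.add_apply, ContinuousLinearMap.smul_apply,
      ContinuousLinearMap.sub_apply, ContinuousLinearMap.proj_apply,
      ContinuousLinearMap.zero_apply, ContinuousLinearMap.coe_smul', Pi.smul_apply,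
      Pi.single_apply, smul_eq_mul, Fin.reduceEq, reduceIte]
    all_goals first
    | (field_simp; ring)
    | ring
  have f7 : pd 7 (It1 C) z = 0 := by
    rw [pd_eq hIt1]
    simp only [ContinuousLinearMap.add_apply, ContinuousLinearMap.smul_apply,
      ContinuousLinearMap.sub_apply, ContinuousLinearMap.proj_apply,
      ContinuousLinearMap.zero_apply, ContinuousLinearMap.coe_smul', Pi.smul_apply,
      Pi.single_apply, smul_eq_mul, Fin.reduceEq, reduceIte]
    all_goals first
    | (field_simp; ring)
    | ring
  have g7 : pd 7 (It2 C) z = 1 := by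
    rw [pd_eq hIt2]
    simp only [ContinuousLinearMap.add_apply, ContinuousLinearMap.smul_apply,
      ContinuousLinearMap.sub_apply, ContinuousLinearMap.proj_apply,
      ContinuousLinearMap.zero_apply, ContinuousLinearMap.coe_smul', Pi.smul_apply,
      Pi.single_apply, smul_eq_mul, Fin.reduceEq, reduceIte]
    all_goals first
    | (field_simp; ring)
    | ring
  constructor <;>
  · simp only [PB, e0, e1, e2, e3, e4, e5, e6, e7, f0, f1, f2, f3, f4, f5, f6, f7,
      g0, g1, g2, g3, g4, g5, g6, g7]
    all_goals field_simp
    all_goals ring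
end

section
/- The four functions H̃_C, Ĩ_1 = p_{θ_2} + (r²C/2)cos²θ_1, Ĩ_2 = p_{θ_3} + (r²C/2)sin²θ_1, Ĩ_3 = p_{θ_1}² + p_{θ_2}²/cos²θ_1 + p_{θ_3}²/sin²θ_1 − (p_{θ_2}+p_{θ_3})² are pairwise in involution ({Ĩ_i, Ĩ_j} = 0 for all i,j) with respect to the twisted Poisson structure of the n = 2 reduced LR Heisenberg system. -/
open Real

noncomputable abbrev pr (j : Fin 8) : Ph →L[ℝ] ℝ := ContinuousLinearMap.proj j

theorem HasFDerivAt.pow2 {f : Ph → ℝ} {f' : Ph →L[ℝ] ℝ} {z : Ph}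
    (h : HasFDerivAt f f' z) :
    HasFDerivAt (fun w => f w ^ 2) ((2 * f z) • f') z := by
  simp only [pow_two, two_mul, add_smul]; exact h.mul h

theorem HasFDerivAt.div2 {f g : Ph → ℝ} {f' g' : Ph →L[ℝ] ℝ} {z : Ph}
    (hf : HasFDerivAt f f' z) (hg : HasFDerivAt g g' z) (h : g z ≠ 0) :
    HasFDerivAt (fun w => f w / g w)
      (f z • ((-(g z ^ 2)⁻¹) • g') + (g z)⁻¹ • f') z := by
  simp only [div_eq_mul_inv]; exact hf.mul ((hasDerivAt_inv h).comp_hasFDerivAt z hg)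

set_option maxHeartbeats 40000000 in
/-- the four functions `H̃_C, Ĩ₁, Ĩ₂, Ĩ₃` are pairwise in
involution with respect to the twisted Poisson structure. -/
theorem LR_hyperspherical_involution (C : ℝ) (z : Ph)
    (hr : 0 < z 0) (hθ : sin (z 1) * cos (z 1) ≠ 0) :
    PB C HamR (It1 C) z = 0 ∧ PB C HamR (It2 C) z = 0 ∧ PB C HamR It3 z = 0 ∧
    PB C (It1 C) (It2 C) z = 0 ∧ PB C (It1 C) It3 z = 0 ∧
    PB C (It2 C) It3 z = 0 := by
  have hs : sin (z 1) ≠ 0 := left_ne_zero_of_mul hθ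
  have hc : cos (z 1) ≠ 0 := right_ne_zero_of_mul hθ
  have hr0 : z 0 ≠ 0 := ne_of_gt hr
  have hr2 : (z 0 : ℝ) ^ 2 ≠ 0 := pow_ne_zero _ hr0
  have hc2 : cos (z 1) ^ 2 ≠ 0 := pow_ne_zero _ hc
  have hs2 : sin (z 1) ^ 2 ≠ 0 := pow_ne_zero _ hs
  have h1r : (1 : ℝ) + (z 0) ^ 2 ≠ 0 := by positivity
  have hc2' : (1 : ℝ) - sin (z 1) ^ 2 ≠ 0 := by rw [← cos_sq']; exact hc2
  have h0 : HasFDerivAt (fun w : Ph => w 0) (pr 0) z := (pr 0).hasFDerivAt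
  have h4 : HasFDerivAt (fun w : Ph => w 4) (pr 4) z := (pr 4).hasFDerivAt
  have h5 : HasFDerivAt (fun w : Ph => w 5) (pr 5) z := (pr 5).hasFDerivAt
  have h6 : HasFDerivAt (fun w : Ph => w 6) (pr 6) z := (pr 6).hasFDerivAt
  have h7 : HasFDerivAt (fun w : Ph => w 7) (pr 7) z := (pr 7).hasFDerivAt
  have hcos : HasFDerivAt (fun w : Ph => cos (w 1)) ((-sin (z 1)) • pr 1) z :=
    by have := (Real.hasDerivAt_cos (z 1)).comp_hasFDerivAt z (pr 1).hasFDerivAt; exact this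
  have hsin : HasFDerivAt (fun w : Ph => sin (w 1)) ((cos (z 1)) • pr 1) z :=
    by have := (Real.hasDerivAt_sin (z 1)).comp_hasFDerivAt z (pr 1).hasFDerivAt; exact this
  have hH : HasFDerivAt HamR _ z :=
    (((h4.pow2.add (h5.pow2.div2 h0.pow2 hr2)).add
      (((hasFDerivAt_const (1:ℝ) z).div2 h0.pow2 hr2).mul
        ((h6.pow2.div2 hcos.pow2 hc2).add (h7.pow2.div2 hsin.pow2 hs2)))).sub
      ((h6.add h7).pow2.div2 ((hasFDerivAt_const (1:ℝ) z).add h0.pow2) h1r)).const_mul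
      (1/2)
  have hI1 : HasFDerivAt (It1 C) _ z :=
    h6.add ((((h0.pow2).mul_const C).div2 (hasFDerivAt_const (2:ℝ) z) two_ne_zero).mul
      hcos.pow2)
  have hI2 : HasFDerivAt (It2 C) _ z :=
    h7.add ((((h0.pow2).mul_const C).div2 (hasFDerivAt_const (2:ℝ) z) two_ne_zero).mul
      hsin.pow2)
  have hI3 : HasFDerivAt It3 _ z :=
    ((h5.pow2.add (h6.pow2.div2 hcos.pow2 hc2)).add
      (h7.pow2.div2 hsin.pow2 hs2)).sub (h6.add h7).pow2
  have pe : ∀ (f : Ph → ℝ) (L : Ph →L[ℝ] ℝ), HasFDerivAt f L z →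
      ∀ i : Fin 8, pd i f z = L (Pi.single i 1) := by
    intro f L h i; rw [pd, h.fderiv]
  have eH0 : pd 0 HamR z = -(z 5 ^ 2) / z 0 ^ 3
      - (z 6 ^ 2 / cos (z 1) ^ 2 + z 7 ^ 2 / sin (z 1) ^ 2) / z 0 ^ 3
      + z 0 * (z 6 + z 7) ^ 2 / (1 + z 0 ^ 2) ^ 2 := by
    rw [pe _ _ hH 0]
    simp [Pi.single_apply]
    field_simp
    ring
  have eH1 : pd 1 HamR z = z 6 ^ 2 * sin (z 1) / (z 0 ^ 2 * (cos (z 1) * cos (z 1) ^ 2))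
      - z 7 ^ 2 * cos (z 1) / (z 0 ^ 2 * (sin (z 1) * sin (z 1) ^ 2)) := by
    rw [pe _ _ hH 1]
    simp [Pi.single_apply]
    field_simp
    ring
  have eH2 : pd 2 HamR z = 0 := by
    rw [pe _ _ hH 2]; simp [Pi.single_apply]
  have eH3 : pd 3 HamR z = 0 := by
    rw [pe _ _ hH 3]; simp [Pi.single_apply]
  have eH4 : pd 4 HamR z = z 4 := by
    rw [pe _ _ hH 4]; simp [Pi.single_apply]; try ring
  have eH5 : pd 5 HamR z = z 5 / z 0 ^ 2 := by
    rw [pe _ _ hH 5]; simp [Pi.single_apply]; try field_simp; try ring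
  have eH6 : pd 6 HamR z = z 6 / (z 0 ^ 2 * cos (z 1) ^ 2)
      - (z 6 + z 7) / (1 + z 0 ^ 2) := by
    rw [pe _ _ hH 6]; simp [Pi.single_apply]; try field_simp; try ring
  have eH7 : pd 7 HamR z = z 7 / (z 0 ^ 2 * sin (z 1) ^ 2)
      - (z 6 + z 7) / (1 + z 0 ^ 2) := by
    rw [pe _ _ hH 7]; simp [Pi.single_apply]; try field_simp; try ring
  have eA0 : pd 0 (It1 C) z = z 0 * C * cos (z 1) ^ 2 := by
    rw [pe _ _ hI1 0]; simp [Pi.single_apply]; try ring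
  have eA1 : pd 1 (It1 C) z = -(z 0 ^ 2 * C * sin (z 1) * cos (z 1)) := by
    rw [pe _ _ hI1 1]; simp [Pi.single_apply]; try ring
  have eA2 : pd 2 (It1 C) z = 0 := by rw [pe _ _ hI1 2]; simp [Pi.single_apply]
  have eA3 : pd 3 (It1 C) z = 0 := by rw [pe _ _ hI1 3]; simp [Pi.single_apply]
  have eA4 : pd 4 (It1 C) z = 0 := by rw [pe _ _ hI1 4]; simp [Pi.single_apply]
  have eA5 : pd 5 (It1 C) z = 0 := by rw [pe _ _ hI1 5]; simp [Pi.single_apply]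
  have eA6 : pd 6 (It1 C) z = 1 := by rw [pe _ _ hI1 6]; simp [Pi.single_apply]
  have eA7 : pd 7 (It1 C) z = 0 := by rw [pe _ _ hI1 7]; simp [Pi.single_apply]
  have eB0 : pd 0 (It2 C) z = z 0 * C * sin (z 1) ^ 2 := by
    rw [pe _ _ hI2 0]; simp [Pi.single_apply]; try ring
  have eB1 : pd 1 (It2 C) z = z 0 ^ 2 * C * sin (z 1) * cos (z 1) := by
    rw [pe _ _ hI2 1]; simp [Pi.single_apply]; try ring
  have eB2 : pd 2 (It2 C) z = 0 := by rw [pe _ _ hI2 2]; simp [Pi.single_apply]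
  have eB3 : pd 3 (It2 C) z = 0 := by rw [pe _ _ hI2 3]; simp [Pi.single_apply]
  have eB4 : pd 4 (It2 C) z = 0 := by rw [pe _ _ hI2 4]; simp [Pi.single_apply]
  have eB5 : pd 5 (It2 C) z = 0 := by rw [pe _ _ hI2 5]; simp [Pi.single_apply]
  have eB6 : pd 6 (It2 C) z = 0 := by rw [pe _ _ hI2 6]; simp [Pi.single_apply]
  have eB7 : pd 7 (It2 C) z = 1 := by rw [pe _ _ hI2 7]; simp [Pi.single_apply]
  have eC0 : pd 0 It3 z = 0 := by rw [pe _ _ hI3 0]; simp [Pi.single_apply]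
  have eC1 : pd 1 It3 z = 2 * z 6 ^ 2 * sin (z 1) / (cos (z 1) * cos (z 1) ^ 2)
      - 2 * z 7 ^ 2 * cos (z 1) / (sin (z 1) * sin (z 1) ^ 2) := by
    rw [pe _ _ hI3 1]; simp [Pi.single_apply]; try field_simp; try ring
  have eC2 : pd 2 It3 z = 0 := by rw [pe _ _ hI3 2]; simp [Pi.single_apply]
  have eC3 : pd 3 It3 z = 0 := by rw [pe _ _ hI3 3]; simp [Pi.single_apply]
  have eC4 : pd 4 It3 z = 0 := by rw [pe _ _ hI3 4]; simp [Pi.single_apply]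
  have eC5 : pd 5 It3 z = 2 * z 5 := by
    rw [pe _ _ hI3 5]; simp [Pi.single_apply]; try ring
  have eC6 : pd 6 It3 z = 2 * z 6 / cos (z 1) ^ 2 - 2 * (z 6 + z 7) := by
    rw [pe _ _ hI3 6]; simp [Pi.single_apply]; try field_simp; try ring
  have eC7 : pd 7 It3 z = 2 * z 7 / sin (z 1) ^ 2 - 2 * (z 6 + z 7) := by
    rw [pe _ _ hI3 7]; simp [Pi.single_apply]; try field_simp; try ring
  refine ⟨?_, ?_, ?_, ?_, ?_, ?_⟩
  · simp only [PB, eH0, eH1, eH2, eH3, eH4, eH5, eH6, eH7,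
      eA0, eA1, eA2, eA3, eA4, eA5, eA6, eA7]
    field_simp
    ring
  · simp only [PB, eH0, eH1, eH2, eH3, eH4, eH5, eH6, eH7,
      eB0, eB1, eB2, eB3, eB4, eB5, eB6, eB7]
    field_simp
    ring
  · simp only [PB, eH0, eH1, eH2, eH3, eH4, eH5, eH6, eH7,
      eC0, eC1, eC2, eC3, eC4, eC5, eC6, eC7]
    rw [cos_sq']
    field_simp
    ring
  · simp only [PB, eA0, eA1, eA2, eA3, eA4, eA5, eA6, eA7,
      eB0, eB1, eB2, eB3, eB4, eB5, eB6, eB7]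
    ring
  · simp only [PB, eA0, eA1, eA2, eA3, eA4, eA5, eA6, eA7,
      eC0, eC1, eC2, eC3, eC4, eC5, eC6, eC7]
    field_simp
    try ring
  · simp only [PB, eB0, eB1, eB2, eB3, eB4, eB5, eB6, eB7,
      eC0, eC1, eC2, eC3, eC4, eC5, eC6, eC7]
    field_simp
    try ring
end
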